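/- Let T : ℝ₊^K → ℝ₊₊^K be a standard interference mapping, ‖·‖ a monotone norm, P > 0, and p* ∈ ℝ₊₊^K the unique fixed point of T̃(p) = (P/‖T(p)‖) T(p). Define utilities u_k(p) = p_k / f_k(p) from the coordinates f_k of T scaled by weights, i.e., T(p) = (γ₁ f₁(p), …, γ_K f_K(p)). Then p* maximizes min_k γ_k^{-1} u_k(p) over {p : ‖p‖ ≤ P}, and every other maximizer q of this problem satisfies q ≥ p* coordinatewise; i.e., p* is the least element of the solution set. -/
import Mathlib

/-- `f` is a standard interference function on `ℝ₊^K`. -/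
def IsStdIF {K : ℕ} (f : (Fin K → ℝ) → ℝ) : Prop :=
  (∀ p : Fin K → ℝ, (∀ i, 0 ≤ p i) → 0 < f p) ∧
  (∀ p q : Fin K → ℝ, (∀ i, 0 ≤ q i) → (∀ i, q i ≤ p i) → f q ≤ f p) ∧
  (∀ p : Fin K → ℝ, (∀ i, 0 ≤ p i) → ∀ α : ℝ, 1 < α → f (α • p) < α * f p)

lemma key_min {K : ℕ} [Nonempty (Fin K)] (f : Fin K → (Fin K → ℝ) → ℝ)
    (hf : ∀ k, IsStdIF (f k)) (γ : Fin K → ℝ) (hγ : ∀ k, 0 < γ k)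
    (c : ℝ) (hc : 0 < c) (pstar q : Fin K → ℝ)
    (hps : ∀ i, 0 < pstar i) (hq : ∀ i, 0 < q i)
    (hpf : ∀ k, pstar k = c * (γ k * f k pstar))
    (hqf : ∀ k, c * (γ k * f k q) ≤ q k) : ∀ k, pstar k ≤ q k := by
  by_contra h
  push_neg at h
  obtain ⟨j, hj⟩ := h
  obtain ⟨k₀, hk₀⟩ := Finite.exists_max (fun k => pstar k / q k)
  set α := pstar k₀ / q k₀ with hα
  have hα1 : 1 < α := lt_of_lt_of_le ((one_lt_div (hq j)).mpr hj) (hk₀ j)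
  have hle : ∀ k, pstar k ≤ α * q k := by
    intro k
    have := hk₀ k
    rwa [div_le_iff₀ (hq k)] at this
  have hmono := (hf k₀).2.1 (α • q) pstar (fun i => (hps i).le)
    (fun i => by simpa [smul_eq_mul] using hle i)
  have hscal := (hf k₀).2.2 q (fun i => (hq i).le) α hα1
  have hkey : pstar k₀ < α * q k₀ := by
    calc pstar k₀ = c * (γ k₀ * f k₀ pstar) := hpf k₀
      _ ≤ c * (γ k₀ * f k₀ (α • q)) :=
          mul_le_mul_of_nonneg_left (mul_le_mul_of_nonneg_left hmono (hγ k₀).le) hc.le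
      _ < c * (γ k₀ * (α * f k₀ q)) :=
          mul_lt_mul_of_pos_left (mul_lt_mul_of_pos_left hscal (hγ k₀)) hc
      _ = α * (c * (γ k₀ * f k₀ q)) := by ring
      _ ≤ α * q k₀ := mul_le_mul_of_nonneg_left (hqf k₀) (by linarith)
  rw [hα, div_mul_cancel₀ _ (hq k₀).ne'] at hkey
  exact lt_irrefl _ hkey

theorem stmt18 {K : ℕ} (f : Fin K → (Fin K → ℝ) → ℝ)
    (hf : ∀ k, IsStdIF (f k)) (hcont : ∀ k, Continuous (f k))
    (γ : Fin K → ℝ) (hγ : ∀ k, 0 < γ k)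
    (T : (Fin K → ℝ) → (Fin K → ℝ)) (hT : ∀ p k, T p k = γ k * f k p)
    (ν : (Fin K → ℝ) → ℝ)
    (hν_pos : ∀ x : Fin K → ℝ, x ≠ 0 → 0 < ν x) (hν0 : ν 0 = 0)
    (hν_smul : ∀ (c : ℝ) (x : Fin K → ℝ), ν (c • x) = |c| * ν x)
    (hν_add : ∀ x y : Fin K → ℝ, ν (x + y) ≤ ν x + ν y)
    (hν_mono : ∀ x y : Fin K → ℝ, (∀ i, 0 ≤ x i) → (∀ i, x i ≤ y i) → ν x ≤ ν y)
    (P : ℝ) (hP : 0 < P)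
    (pstar : Fin K → ℝ) (hps : ∀ i, 0 < pstar i)
    (hfix : (P / ν (T pstar)) • T pstar = pstar) :
    IsMaxOn (fun p => ⨅ k : Fin K, (γ k)⁻¹ * (p k / f k p))
      {p : Fin K → ℝ | (∀ i, 0 ≤ p i) ∧ ν p ≤ P} pstar ∧
    (∀ q : Fin K → ℝ, ((∀ i, 0 ≤ q i) ∧ ν q ≤ P) →
      IsMaxOn (fun p => ⨅ k : Fin K, (γ k)⁻¹ * (p k / f k p))
        {p : Fin K → ℝ | (∀ i, 0 ≤ p i) ∧ ν p ≤ P} q →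
      pstar ≤ q) := by
  rcases Nat.eq_zero_or_pos K with hK | hK
  · subst hK
    constructor
    · intro x hx
      simp only [Set.mem_setOf_eq]
      simp [Real.iInf_of_isEmpty]
    · intro q hq hmax
      exact fun i => i.elim0
  haveI : Nonempty (Fin K) := Fin.pos_iff_nonempty.mp hK
  -- basic positivity facts
  have hfps : ∀ k, 0 < f k pstar := fun k => (hf k).1 pstar (fun i => (hps i).le)
  have hTps : ∀ k, 0 < T pstar k := fun k => by
    rw [hT]; exact mul_pos (hγ k) (hfps k)
  have hνT : 0 < ν (T pstar) := by
    apply hν_pos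
    intro h
    obtain ⟨k⟩ := (inferInstance : Nonempty (Fin K))
    have := congrFun h k
    simp only [Pi.zero_apply] at this
    exact (hTps k).ne' this
  set c := P / ν (T pstar) with hcdef
  have hc : 0 < c := div_pos hP hνT
  have hpf : ∀ k, pstar k = c * (γ k * f k pstar) := by
    intro k
    have := congrFun hfix k
    simp only [Pi.smul_apply, smul_eq_mul, hT] at this
    linarith [this]
  have hνps : ν pstar = P := by
    rw [← hfix, hν_smul, abs_of_pos hc, hcdef, div_mul_cancel₀ _ hνT.ne']
  have hupstar : (⨅ k : Fin K, (γ k)⁻¹ * (pstar k / f k pstar)) = c := by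
    have huk : ∀ k, (γ k)⁻¹ * (pstar k / f k pstar) = c := by
      intro k
      have h1 : γ k ≠ 0 := (hγ k).ne'
      have h2 : f k pstar ≠ 0 := (hfps k).ne'
      rw [hpf k]
      field_simp
    simp only [huk, ciInf_const]
  -- key: any feasible strictly positive q with u(q) ≥ c satisfies q ≥ c T q, hence pstar ≤ q
  have key_from_inf : ∀ q : Fin K → ℝ, (∀ i, 0 ≤ q i) →
      c ≤ (⨅ k : Fin K, (γ k)⁻¹ * (q k / f k q)) →
      (∀ k, 0 < q k) ∧ (∀ k, c * (γ k * f k q) ≤ q k) := by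
    intro q hq0 hcle
    have hfq : ∀ k, 0 < f k q := fun k => (hf k).1 q hq0
    have hbdd : BddBelow (Set.range fun k => (γ k)⁻¹ * (q k / f k q)) :=
      Set.Finite.bddBelow (Set.finite_range _)
    have hterm : ∀ k, c ≤ (γ k)⁻¹ * (q k / f k q) := fun k =>
      le_trans hcle (ciInf_le hbdd k)
    have hqpos : ∀ k, 0 < q k := by
      intro k
      rcases lt_or_eq_of_le (hq0 k) with h | h
      · exact h
      · exfalso
        have := hterm k
        rw [← h] at this
        simp at this
        nlinarith [this]
    refine ⟨hqpos, fun k => ?_⟩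
    have h1 := hterm k
    have h2 : (γ k)⁻¹ * (q k / f k q) = q k / (γ k * f k q) := by
      field_simp
    rw [h2, le_div_iff₀ (mul_pos (hγ k) (hfq k))] at h1
    linarith [h1]
  constructor
  · -- maximality
    intro q hq
    simp only [Set.mem_setOf_eq] at hq
    show (⨅ k : Fin K, (γ k)⁻¹ * (q k / f k q)) ≤
      (⨅ k : Fin K, (γ k)⁻¹ * (pstar k / f k pstar))
    rw [hupstar]
    by_contra hcon
    push_neg at hcon
    have hfq : ∀ k, 0 < f k q := fun k => (hf k).1 q hq.1
    obtain ⟨hqpos, hqf⟩ := key_from_inf q hq.1 hcon.le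
    have hbdd : BddBelow (Set.range fun k => (γ k)⁻¹ * (q k / f k q)) :=
      Set.Finite.bddBelow (Set.finite_range _)
    have hstrict : ∀ k, c * (γ k * f k q) < q k := by
      intro k
      have h1 := lt_of_lt_of_le hcon (ciInf_le hbdd k)
      have h2 : (γ k)⁻¹ * (q k / f k q) = q k / (γ k * f k q) := by field_simp
      rw [h2, lt_div_iff₀ (mul_pos (hγ k) (hfq k))] at h1
      linarith [h1]
    -- pick the scaling β < 1
    obtain ⟨k₁, hk₁⟩ := Finite.exists_max (fun k => c * (γ k * f k q) / q k)
    set β := c * (γ k₁ * f k₁ q) / q k₁ with hβdef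
    have hβpos : 0 < β := div_pos (mul_pos hc (mul_pos (hγ k₁) (hfq k₁))) (hqpos k₁)
    have hβlt1 : β < 1 := (div_lt_one (hqpos k₁)).mpr (hstrict k₁)
    have hβle : ∀ k, c * (γ k * f k q) ≤ β * q k := by
      intro k
      have := hk₁ k
      rwa [div_le_iff₀ (hqpos k)] at this
    set r := β • q with hrdef
    have hrpos : ∀ i, 0 < r i := fun i => by
      simp only [hrdef, Pi.smul_apply, smul_eq_mul]
      exact mul_pos hβpos (hqpos i)
    have hrle : ∀ i, r i ≤ q i := fun i => by
      simp only [hrdef, Pi.smul_apply, smul_eq_mul]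
      nlinarith [hqpos i]
    have hrf : ∀ k, c * (γ k * f k r) ≤ r k := by
      intro k
      have hm := (hf k).2.1 q r (fun i => (hrpos i).le) hrle
      have : c * (γ k * f k r) ≤ c * (γ k * f k q) :=
        mul_le_mul_of_nonneg_left (mul_le_mul_of_nonneg_left hm (hγ k).le) hc.le
      refine le_trans this (le_trans (hβle k) ?_)
      simp [hrdef]
    have hle := key_min f hf γ hγ c hc pstar r hps hrpos hpf hrf
    have h1 : ν pstar ≤ ν r := hν_mono pstar r (fun i => (hps i).le) hle
    have h2 : ν r = β * ν q := by rw [hrdef, hν_smul, abs_of_pos hβpos]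
    have h3 : ν q ≤ P := hq.2
    have : P < P := by
      calc P = ν pstar := hνps.symm
        _ ≤ β * ν q := by rw [← h2]; exact h1
        _ ≤ β * P := by nlinarith [h3]
        _ < P := by nlinarith
    exact lt_irrefl _ this
  · -- least element
    intro q hq hmax
    have hmem : pstar ∈ {p : Fin K → ℝ | (∀ i, 0 ≤ p i) ∧ ν p ≤ P} :=
      ⟨fun i => (hps i).le, hνps.le⟩
    have h1 : c ≤ (⨅ k : Fin K, (γ k)⁻¹ * (q k / f k q)) := by
      have := hmax hmem
      simpa [hupstar] using this
    obtain ⟨hqpos, hqf⟩ := key_from_inf q hq.1 h1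
    exact key_min f hf γ hγ c hc pstar q hps hqpos hpf hqf
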